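/- Let f : ℝ^m → ℝ^k be a polynomial map with k ≥ m, f(0) = 0, and Df(0) of rank m with the top m×m minor invertible. Define F : ℝ^m → ℝ^m by F = (f₁, …, f_{m-1}, f_m + f_m² + f_{m+1}² + ⋯ + f_k²). Then f is proper if and only if F is proper. -/

import Mathlib

open Filter Matrix

theorem stmt12 {m k : ℕ} (hm : 0 < m) (hkm : m ≤ k)
    (f : (Fin m → ℝ) → (Fin k → ℝ))
    (hpoly : ∃ p : Fin k → MvPolynomial (Fin m) ℝ,
      ∀ x j, f x j = MvPolynomial.eval x (p j))
    (hf0 : f 0 = 0)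
    (hDf : Function.Bijective
      (fun v : Fin m → ℝ => fun i : Fin m => fderiv ℝ f 0 v (Fin.castLE hkm i)))
    (F : (Fin m → ℝ) → (Fin m → ℝ))
    (hF : ∀ x (i : Fin m), F x i =
      if (i : ℕ) + 1 < m then f x (Fin.castLE hkm i)
      else f x (Fin.castLE hkm i) +
        ∑ j : Fin k, (if m ≤ (j : ℕ) + 1 then (f x j) ^ 2 else 0)) :
    (∀ K : Set (Fin k → ℝ), IsCompact K → IsCompact (f ⁻¹' K)) ↔
    (∀ K : Set (Fin m → ℝ), IsCompact K → IsCompact (F ⁻¹' K)) := by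
  obtain ⟨p, hp⟩ := hpoly
  have hfc : Continuous f := by
    have : f = fun x j => MvPolynomial.eval x (p j) := funext fun x => funext (hp x)
    rw [this]
    exact continuous_pi fun j => (p j).continuous_eval
  have hfc' : ∀ j, Continuous fun x => f x j := fun j => (continuous_apply j).comp hfc
  have hFc : Continuous F := by
    have : F = fun x (i : Fin m) =>
        if (i : ℕ) + 1 < m then f x (Fin.castLE hkm i)
        else f x (Fin.castLE hkm i) +
          ∑ j : Fin k, (if m ≤ (j : ℕ) + 1 then (f x j) ^ 2 else 0) :=
      funext fun x => funext (hF x)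
    rw [this]
    refine continuous_pi fun i => ?_
    split_ifs
    · exact hfc' _
    · refine (hfc' _).add (continuous_finset_sum _ fun j _ => ?_)
      split_ifs
      · exact (hfc' j).pow 2
      · exact continuous_const
  constructor
  · intro hf K hK
    obtain ⟨r, hr⟩ := hK.isBounded.subset_closedBall 0
    set C := max r 0 with hCdef
    have hC0 : (0:ℝ) ≤ C := le_max_right _ _
    have hbound : ∀ x ∈ F ⁻¹' K, ∀ j : Fin k, |f x j| ≤ C + 1 := by
      intro x hx j
      have hcoord : ∀ i : Fin m, |F x i| ≤ C := by
        intro i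
        calc |F x i| ≤ ‖F x‖ := by
              simpa [Real.norm_eq_abs] using norm_le_pi_norm (F x) i
          _ ≤ r := mem_closedBall_zero_iff.1 (hr hx)
          _ ≤ C := le_max_left _ _
      -- bound on the last coordinate group
      have him : m - 1 < m := Nat.sub_lt hm Nat.one_pos
      set i0 : Fin m := ⟨m - 1, him⟩ with hi0
      have hi0v : (i0 : ℕ) + 1 = m := Nat.succ_pred_eq_of_pos hm
      have hncond : ¬ ((i0 : ℕ) + 1 < m) := by omega
      set t := f x (Fin.castLE hkm i0) with ht
      set S := ∑ j : Fin k, (if m ≤ (j : ℕ) + 1 then (f x j) ^ 2 else 0) with hS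
      have hFi0 : F x i0 = t + S := by rw [hF]; simp [hncond]; rfl
      have hterm_nonneg : ∀ j : Fin k, (0:ℝ) ≤ if m ≤ (j : ℕ) + 1 then (f x j) ^ 2 else 0 := by
        intro j; split_ifs; exacts [sq_nonneg _, le_rfl]
      have hSle : ∀ j : Fin k, m ≤ (j : ℕ) + 1 → (f x j) ^ 2 ≤ S := by
        intro j hj
        have := Finset.single_le_sum (f := fun j : Fin k =>
          if m ≤ (j : ℕ) + 1 then (f x j) ^ 2 else 0)
          (fun j _ => hterm_nonneg j) (Finset.mem_univ j)
        simpa [hj] using this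
      have ht2S : t ^ 2 ≤ S := by
        refine hSle (Fin.castLE hkm i0) ?_
        simp [Fin.castLE, hi0v]
      have hS0 : 0 ≤ S := Finset.sum_nonneg fun j _ => hterm_nonneg j
      have habs : |t + S| ≤ C := hFi0 ▸ hcoord i0
      have h1 : t + S ≤ C := (abs_le.1 habs).2
      have h2 : -C ≤ t + S := (abs_le.1 habs).1
      have htle : |t| ≤ C + 1 := by
        rw [abs_le]
        constructor
        · nlinarith [sq_nonneg (t + 1)]
        · nlinarith [sq_nonneg t]
      have hSb : S ≤ 2 * C + 1 := by nlinarith [abs_le.1 htle]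
      by_cases hj : m ≤ (j : ℕ) + 1
      · have := hSle j hj
        nlinarith [sq_nonneg (|f x j| - 1), sq_abs (f x j)]
      · -- small index
        push_neg at hj
        have hjm : (j : ℕ) < m := by omega
        set i : Fin m := ⟨j, hjm⟩ with hi
        have hji : Fin.castLE hkm i = j := by ext; rfl
        have hcond : (i : ℕ) + 1 < m := by simpa using hj
        have := hcoord i
        rw [hF x i, if_pos hcond, hji] at this
        linarith
    have hsub : F ⁻¹' K ⊆ f ⁻¹' (Metric.closedBall 0 (C + 1)) := by
      intro x hx
      simp only [Set.mem_preimage, mem_closedBall_zero_iff]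
      rw [pi_norm_le_iff_of_nonneg (by linarith)]
      intro j
      simpa [Real.norm_eq_abs] using hbound x hx j
    exact (hf _ (isCompact_closedBall 0 (C + 1))).of_isClosed_subset
      (hK.isClosed.preimage hFc) hsub
  · intro hFp K hK
    obtain ⟨r, hr⟩ := hK.isBounded.subset_closedBall 0
    set C := max r 0 with hCdef
    have hC0 : (0:ℝ) ≤ C := le_max_right _ _
    set R := C + k * C ^ 2 with hR
    have hR0 : (0:ℝ) ≤ R := by positivity
    have hbound : ∀ x ∈ f ⁻¹' K, ∀ i : Fin m, |F x i| ≤ R := by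
      intro x hx i
      have hcoord : ∀ j : Fin k, |f x j| ≤ C := by
        intro j
        calc |f x j| ≤ ‖f x‖ := by
              simpa [Real.norm_eq_abs] using norm_le_pi_norm (f x) j
          _ ≤ r := mem_closedBall_zero_iff.1 (hr hx)
          _ ≤ C := le_max_left _ _
      rw [hF]
      split_ifs
      · calc |f x (Fin.castLE hkm i)| ≤ C := hcoord _
          _ ≤ R := by
              have : 0 ≤ (k:ℝ) * C ^ 2 := by positivity
              linarith [hR]
      · have hSb : ∑ j : Fin k, (if m ≤ (j : ℕ) + 1 then (f x j) ^ 2 else 0)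
            ≤ k * C ^ 2 := by
          calc ∑ j : Fin k, (if m ≤ (j : ℕ) + 1 then (f x j) ^ 2 else 0)
              ≤ ∑ _j : Fin k, C ^ 2 := by
                refine Finset.sum_le_sum fun j _ => ?_
                split_ifs
                · have := hcoord j
                  nlinarith [sq_abs (f x j), abs_nonneg (f x j)]
                · positivity
            _ = k * C ^ 2 := by simp [Finset.sum_const, mul_comm]
        have hS0 : 0 ≤ ∑ j : Fin k, (if m ≤ (j : ℕ) + 1 then (f x j) ^ 2 else 0) := by
          refine Finset.sum_nonneg fun j _ => ?_
          split_ifs; exacts [sq_nonneg _, le_rfl]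
        have h1 := hcoord (Fin.castLE hkm i)
        rw [abs_le] at h1 ⊢
        constructor <;> [linarith; linarith]
    have hsub : f ⁻¹' K ⊆ F ⁻¹' (Metric.closedBall 0 R) := by
      intro x hx
      simp only [Set.mem_preimage, mem_closedBall_zero_iff]
      rw [pi_norm_le_iff_of_nonneg hR0]
      intro i
      simpa [Real.norm_eq_abs] using hbound x hx i
    exact (hFp _ (isCompact_closedBall 0 R)).of_isClosed_subset
      (hK.isClosed.preimage hfc) hsub
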